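/- arXiv:1507.07799 — 3 statements merged into one kernel-verified Lean document; each statement's English description precedes it below -/
import Mathlib

section
/- Let I ⊆ ℝ be an open interval, k ∈ ℕ, and t ∈ ℝ. Let p : I → ℝ be differentiable, let η₁ < η₂ < ⋯ < η_k be real constants, let c₁ < c₂ < ⋯ < c_k be real constants, and set ξ₀(θ) := p(θ), ξ_i(θ) := c_i + θ for i = 1,…,k, and η_{k+1} := t. Assume ξ₀(θ) < η₁ < ξ₁(θ) < η₂ < ⋯ < ξ_k(θ) < η_{k+1} for all θ ∈ I. For i = 1,…,k+1 let h_i : ℝ × I → ℝ be continuously differentiable, and for i = 1,…,k let g_i : ℝ → ℝ be continuous. Define f : ℝ × I → ℝ by f(τ,θ) := h_i(τ,θ) for ξ_{i−1}(θ) ≤ τ < η_i (the 'green' intervals) and f(τ,θ) := g_i(τ) for η_i ≤ τ < ξ_i(θ) (the 'red' intervals), and assume f is continuous across each η_i, i.e. h_i(η_i,θ) = g_i(η_i) for all θ ∈ I. Then x(θ) := ∫_{p(θ)}^{t} f(τ,θ) dτ is differentiable on I, and x′(θ) = −h₁(p(θ),θ)·p′(θ) + Σ_{i=1}^{k} ( g_i(ξ_i(θ))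 − h_{i+1}(ξ_i(θ),θ) ) + Σ_{i=1}^{k+1} ∫_{ξ_{i−1}(θ)}^{η_i} (∂h_i/∂θ)(τ,θ) dτ. -/
open MeasureTheory intervalIntegral Set Metric Asymptotics

section Helpers

lemma ae_Ioo_imp {u v : ℝ → ℝ} {a b : ℝ} (hab : a ≤ b)
    (huv : ∀ x ∈ Set.Ioo a b, u x = v x) :
    ∀ᵐ x : ℝ ∂volume, x ∈ Set.uIoc a b → u x = v x := by
  have hb : ∀ᵐ x : ℝ ∂volume, x ≠ b := by
    rw [MeasureTheory.ae_iff]; simpa using Real.volume_singleton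
  filter_upwards [hb] with x hx hxm
  rw [Set.uIoc_of_le hab] at hxm
  exact huv x ⟨hxm.1, lt_of_le_of_ne hxm.2 hx⟩

lemma intervalIntegrable_and_integral_congr_Ioo {u v : ℝ → ℝ} {a b : ℝ} (hab : a ≤ b)
    (huv : ∀ x ∈ Set.Ioo a b, u x = v x) (hv : IntervalIntegrable v volume a b) :
    IntervalIntegrable u volume a b ∧ ∫ x in a..b, u x = ∫ x in a..b, v x := by
  have hae := ae_Ioo_imp hab huv
  refine ⟨hv.congr_ae ?_, intervalIntegral.integral_congr_ae hae⟩
  rw [Filter.eventuallyEq_comm, Filter.EventuallyEq,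
    MeasureTheory.ae_restrict_iff' measurableSet_uIoc]
  exact hae

lemma sum_even_odd (k : ℕ) (v : ℕ → ℝ) :
    ∑ j ∈ Finset.range (2*k+1), v j =
      (∑ m ∈ Finset.range (k+1), v (2*m)) + ∑ m ∈ Finset.range k, v (2*m+1) := by
  induction k with
  | zero => simp
  | succ n ih =>
      have h1 : 2*(n+1)+1 = (2*n+1) + 1 + 1 := by ring
      rw [h1, Finset.sum_range_succ, Finset.sum_range_succ, ih,
        Finset.sum_range_succ (fun m => v (2*m)) (n+1),
        Finset.sum_range_succ (fun m => v (2*m+1)) n]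
      have e1 : 2*n+1+1 = 2*(n+1) := by ring
      rw [e1]
      ring

lemma sum_Icc_one (k : ℕ) (w : ℕ → ℝ) :
    ∑ i ∈ Finset.Icc 1 (k+1), w i = ∑ i ∈ Finset.range (k+1), w (1+i) := by
  rw [← Finset.Ico_add_one_right_eq_Icc, Finset.sum_Ico_eq_sum_range]
  simp

lemma sum_Icc_one' (k : ℕ) (w : ℕ → ℝ) :
    ∑ i ∈ Finset.Icc 1 k, w i = ∑ i ∈ Finset.range k, w (1+i) := by
  cases k with
  | zero => simp
  | succ n => exact sum_Icc_one n w

end Helpers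

lemma leibniz_left
    {A B : ℝ} {θ₀ : ℝ} (hθ : θ₀ ∈ Set.Ioo A B)
    {H : ℝ → ℝ → ℝ}
    (hH : ContDiffOn ℝ 1 (fun q : ℝ × ℝ => H q.1 q.2) (Set.univ ×ˢ Set.Ioo A B))
    {a : ℝ → ℝ} {a' : ℝ} (ha : HasDerivAt a a' θ₀) (b : ℝ) :
    HasDerivAt (fun θ => ∫ τ in a θ..b, H τ θ)
      (-(H (a θ₀) θ₀ * a') + ∫ τ in a θ₀..b, deriv (fun θ' => H τ θ') θ₀) θ₀ := by
  set s : Set (ℝ × ℝ) := Set.univ ×ˢ Set.Ioo A B with hs_def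
  have hs : IsOpen s := isOpen_univ.prod isOpen_Ioo
  have hmem : ∀ (τ θ : ℝ), θ ∈ Set.Ioo A B → (τ, θ) ∈ s := fun τ θ hθ' => ⟨Set.mem_univ _, hθ'⟩
  -- continuity of H and of its fderiv
  have hHc : ContinuousOn (fun q : ℝ × ℝ => H q.1 q.2) s := hH.continuousOn
  have hD : ContinuousOn (fun q : ℝ × ℝ => fderiv ℝ (fun q : ℝ × ℝ => H q.1 q.2) q) s :=
    hH.continuousOn_fderiv_of_isOpen hs le_rfl
  set D : ℝ → ℝ → ℝ := fun τ θ => fderiv ℝ (fun q : ℝ × ℝ => H q.1 q.2) (τ, θ) (0, 1) with hD_def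
  -- partial derivative in θ
  have hderiv : ∀ (τ θ : ℝ), θ ∈ Set.Ioo A B →
      HasDerivAt (fun θ' => H τ θ') (D τ θ) θ := by
    intro τ θ hθ'
    have hdiff : DifferentiableAt ℝ (fun q : ℝ × ℝ => H q.1 q.2) (τ, θ) :=
      (hH.differentiableOn one_ne_zero).differentiableAt (hs.mem_nhds (hmem τ θ hθ'))
    have hline : HasDerivAt (fun θ' : ℝ => ((τ, θ') : ℝ × ℝ)) ((0 : ℝ), (1 : ℝ)) θ :=
      (hasDerivAt_const θ τ).prodMk (hasDerivAt_id θ)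
    exact hdiff.hasFDerivAt.comp_hasDerivAt θ hline
  have hderiv_eq : ∀ (τ θ : ℝ), θ ∈ Set.Ioo A B →
      deriv (fun θ' => H τ θ') θ = D τ θ := fun τ θ hθ' => (hderiv τ θ hθ').deriv
  -- continuity of slices
  have hcτ : ∀ θ ∈ Set.Ioo A B, Continuous (fun τ => H τ θ) := by
    intro θ hθ'
    rw [← continuousOn_univ]
    exact hHc.comp (Continuous.continuousOn (continuous_id.prodMk continuous_const)) (fun τ _ => hmem τ θ hθ')
  -- ε ball inside Ioo A B
  obtain ⟨ε, εpos, hball⟩ := Metric.nhds_basis_closedBall.mem_iff.1 (isOpen_Ioo.mem_nhds hθ)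
  have hball' : Metric.ball θ₀ ε ⊆ Set.Ioo A B := fun x hx => hball (ball_subset_closedBall hx)
  -- bound on fderiv on compact sets
  have hbound : ∀ (K : Set ℝ), IsCompact K → ∃ M : ℝ, 0 ≤ M ∧ ∀ τ ∈ K, ∀ θ ∈ Metric.closedBall θ₀ ε,
      ‖D τ θ‖ ≤ M := by
    intro K hK
    have hKc : IsCompact (K ×ˢ Metric.closedBall θ₀ ε) := hK.prod (isCompact_closedBall _ _)
    have hsub : K ×ˢ Metric.closedBall θ₀ ε ⊆ s := fun q hq => ⟨Set.mem_univ _, hball hq.2⟩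
    obtain ⟨M, hM⟩ := hKc.exists_bound_of_continuousOn (hD.mono hsub)
    refine ⟨max M 0, le_max_right _ _, fun τ hτ θ hθ' => ?_⟩
    calc ‖D τ θ‖ ≤ ‖fderiv ℝ (fun q : ℝ × ℝ => H q.1 q.2) (τ, θ)‖ * ‖((0 : ℝ), (1 : ℝ))‖ :=
          ContinuousLinearMap.le_opNorm _ _
      _ ≤ max M 0 * 1 := by
          apply mul_le_mul (le_trans (hM _ ⟨hτ, hθ'⟩) (le_max_left _ _)) ?_ (norm_nonneg _)
            (le_max_right _ _)
          rw [Prod.norm_def]; simp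
      _ = max M 0 := mul_one _
  -- continuity of D slices in τ
  have hDτ : ∀ θ ∈ Set.Ioo A B, Continuous (fun τ => D τ θ) := by
    intro θ hθ'
    rw [← continuousOn_univ]
    have h1 : ContinuousOn (fun τ : ℝ => fderiv ℝ (fun q : ℝ × ℝ => H q.1 q.2) (τ, θ))
        Set.univ := hD.comp (Continuous.continuousOn (continuous_id.prodMk continuous_const)) (fun τ _ => hmem τ θ hθ')
    exact (ContinuousLinearMap.apply ℝ ℝ ((0 : ℝ), (1 : ℝ))).continuous.comp_continuousOn h1
  -- Part 1: G θ = ∫ τ in a θ₀..b, H τ θ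
  obtain ⟨M, hM0, hM⟩ := hbound (Set.uIcc (a θ₀) b) isCompact_uIcc
  have hG : HasDerivAt (fun θ => ∫ τ in a θ₀..b, H τ θ)
      (∫ τ in a θ₀..b, D τ θ₀) θ₀ := by
    have key := intervalIntegral.hasDerivAt_integral_of_dominated_loc_of_deriv_le
      (F := fun θ τ => H τ θ) (F' := fun θ τ => D τ θ) (x₀ := θ₀) (a := a θ₀) (b := b)
      (bound := fun _ => M) (μ := volume) (Metric.ball_mem_nhds θ₀ εpos) ?_ ?_ ?_ ?_ ?_ ?_
    · exact key.2
    · filter_upwards [isOpen_Ioo.mem_nhds hθ] with θ hθ'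
      exact ((hcτ θ hθ').aestronglyMeasurable).restrict
    · exact (hcτ θ₀ hθ).intervalIntegrable _ _
    · exact ((hDτ θ₀ hθ).aestronglyMeasurable).restrict
    · refine Filter.Eventually.of_forall (fun τ hτ θ hθ' => ?_)
      exact hM τ (uIoc_subset_uIcc hτ) θ (ball_subset_closedBall hθ')
    · exact intervalIntegrable_const
    · refine Filter.Eventually.of_forall (fun τ hτ θ hθ' => ?_)
      exact hderiv τ θ (hball' hθ')
  -- Part 2: J₁
  have hφ : HasDerivAt (fun u => ∫ τ in a θ₀..u, H τ θ₀) (H (a θ₀) θ₀) (a θ₀) := by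
    refine intervalIntegral.integral_hasDerivAt_right
      ((hcτ θ₀ hθ).intervalIntegrable _ _) ?_ (hcτ θ₀ hθ).continuousAt
    exact (hcτ θ₀ hθ).stronglyMeasurable.stronglyMeasurableAtFilter
  have hJ₁ : HasDerivAt (fun θ => ∫ τ in a θ₀..a θ, H τ θ₀) (H (a θ₀) θ₀ * a') θ₀ :=
    hφ.comp θ₀ ha
  -- Part 3: J₂
  obtain ⟨M', hM'0, hM'⟩ := hbound (Set.Icc (a θ₀ - 1) (a θ₀ + 1)) isCompact_Icc
  have hθball : θ₀ ∈ Metric.ball θ₀ ε := Metric.mem_ball_self εpos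
  have hlip : ∀ τ ∈ Set.Icc (a θ₀ - 1) (a θ₀ + 1), ∀ θ ∈ Metric.ball θ₀ ε,
      ‖H τ θ - H τ θ₀‖ ≤ M' * ‖θ - θ₀‖ := by
    intro τ hτ θ hθ'
    refine Convex.norm_image_sub_le_of_norm_hasDerivWithin_le
      (f := fun θ' => H τ θ') (f' := fun θ' => D τ θ') (C := M') ?_ ?_ (convex_ball _ _) hθball hθ'
    · exact fun x hx => (hderiv τ x (hball' hx)).hasDerivWithinAt
    · exact fun x hx => hM' τ hτ x (ball_subset_closedBall hx)
  have h0 : Filter.Tendsto (fun θ => a θ - a θ₀) (nhds θ₀) (nhds 0) := by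
    simpa using ha.continuousAt.tendsto.sub_const (a θ₀)
  have hfar : ∀ᶠ θ in nhds θ₀, |a θ - a θ₀| ≤ 1 := by
    filter_upwards [NormedAddCommGroup.tendsto_nhds_zero.mp h0 1 one_pos] with θ hθ'
    exact le_of_lt (by simpa [Real.norm_eq_abs] using hθ')
  have hbig : (fun θ => ∫ τ in a θ₀..a θ, (H τ θ - H τ θ₀)) =O[nhds θ₀]
      (fun θ => (θ - θ₀) * (a θ - a θ₀)) := by
    rw [Asymptotics.isBigO_iff]
    refine ⟨M', ?_⟩
    filter_upwards [hfar, Metric.ball_mem_nhds θ₀ εpos] with θ h1 h2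
    have hsub : Set.uIcc (a θ₀) (a θ) ⊆ Set.Icc (a θ₀ - 1) (a θ₀ + 1) := by
      apply Set.uIcc_subset_Icc
      · constructor <;> linarith
      · have := abs_le.1 h1; constructor <;> linarith [this.1, this.2]
    have hle : ∀ τ ∈ Set.uIoc (a θ₀) (a θ), ‖H τ θ - H τ θ₀‖ ≤ M' * ‖θ - θ₀‖ :=
      fun τ hτ => hlip τ (hsub (Set.uIoc_subset_uIcc hτ)) θ h2
    calc ‖∫ τ in a θ₀..a θ, (H τ θ - H τ θ₀)‖ ≤ M' * ‖θ - θ₀‖ * |a θ - a θ₀| :=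
          intervalIntegral.norm_integral_le_of_norm_le_const hle
      _ = M' * ‖(θ - θ₀) * (a θ - a θ₀)‖ := by
          rw [Real.norm_eq_abs, Real.norm_eq_abs, abs_mul]; ring
  have hsmall : (fun θ => (θ - θ₀) * (a θ - a θ₀)) =o[nhds θ₀] (fun θ => θ - θ₀) := by
    have h1 : (fun θ : ℝ => θ - θ₀) =O[nhds θ₀] (fun θ => θ - θ₀) :=
      Asymptotics.isBigO_refl _ _
    have h2 : (fun θ => a θ - a θ₀) =o[nhds θ₀] (fun _ : ℝ => (1 : ℝ)) :=
      Asymptotics.isLittleO_one_iff ℝ |>.2 h0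
    simpa using h1.mul_isLittleO h2
  have hJ₂ : HasDerivAt (fun θ => ∫ τ in a θ₀..a θ, (H τ θ - H τ θ₀)) 0 θ₀ := by
    rw [hasDerivAt_iff_isLittleO]
    simpa [intervalIntegral.integral_same] using hbig.trans_isLittleO hsmall
  -- Assembly
  have heq : ∀ᶠ θ in nhds θ₀, (∫ τ in a θ..b, H τ θ) =
      (∫ τ in a θ₀..b, H τ θ) -
        ((∫ τ in a θ₀..a θ, H τ θ₀) + ∫ τ in a θ₀..a θ, (H τ θ - H τ θ₀)) := by
    filter_upwards [isOpen_Ioo.mem_nhds hθ] with θ hθ'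
    have hcont := hcτ θ hθ'
    have hcont0 := hcτ θ₀ hθ
    have h1 : (∫ τ in a θ₀..a θ, H τ θ₀) + ∫ τ in a θ₀..a θ, (H τ θ - H τ θ₀) =
        ∫ τ in a θ₀..a θ, H τ θ := by
      rw [← intervalIntegral.integral_add (hcont0.intervalIntegrable _ _)
        (show IntervalIntegrable (fun τ => H τ θ - H τ θ₀) volume _ _ from (hcont.sub hcont0).intervalIntegrable _ _)]
      simp
    have h2 : (∫ τ in a θ₀..a θ, H τ θ) + ∫ τ in a θ..b, H τ θ = ∫ τ in a θ₀..b, H τ θ :=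
      intervalIntegral.integral_add_adjacent_intervals (hcont.intervalIntegrable _ _)
        (hcont.intervalIntegrable _ _)
    rw [h1]; linarith
  have hsum : HasDerivAt (fun θ => (∫ τ in a θ₀..b, H τ θ) -
      ((∫ τ in a θ₀..a θ, H τ θ₀) + ∫ τ in a θ₀..a θ, (H τ θ - H τ θ₀)))
      ((∫ τ in a θ₀..b, D τ θ₀) - (H (a θ₀) θ₀ * a' + 0)) θ₀ := hG.sub (hJ₁.add hJ₂)
  have final := hsum.congr_of_eventuallyEq heq
  refine final.congr_deriv ?_
  rw [intervalIntegral.integral_congr (g := fun τ => D τ θ₀)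
    (fun τ _ => hderiv_eq τ θ₀ hθ)]
  ring

/-- Lemma 1 of the paper, Eq. (17): with breakpoints
ξ₀(θ) = p(θ), ξ_i(θ) = c_i + θ (starts of green periods), η_i constant (starts
of red periods), η_{k+1} = t, interleaved as
ξ₀(θ) < η₁ < ξ₁(θ) < η₂ < ⋯ < ξ_k(θ) < η_{k+1}, the integrand f equal to the
C¹ function h_i on the green intervals [ξ_{i−1}(θ), η_i) and to the continuous
(θ-independent) function g_i on the red intervals [η_i, ξ_i(θ)), continuous
across each η_i, the function x(θ) = ∫_{p(θ)}^{t} f(τ,θ) dτ is differentiable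
on the open interval I = Ioo A B with
x′(θ) = −h₁(p(θ),θ)·p′(θ) + Σ_{i=1}^{k} ( g_i(ξ_i(θ)) − h_{i+1}(ξ_i(θ),θ) )
        + Σ_{i=1}^{k+1} ∫_{ξ_{i−1}(θ)}^{η_i} ∂h_i/∂θ(τ,θ) dτ. -/
theorem traffic_lemma1
    (k : ℕ) (t A B : ℝ)
    (p p' : ℝ → ℝ) (η c : ℕ → ℝ) (ξ : ℕ → ℝ → ℝ)
    (h : ℕ → ℝ → ℝ → ℝ) (g : ℕ → ℝ → ℝ) (f : ℝ → ℝ → ℝ)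
    (hp : ∀ θ ∈ Set.Ioo A B, HasDerivAt p (p' θ) θ)
    (hξ0 : ∀ θ : ℝ, ξ 0 θ = p θ)
    (hξc : ∀ i : ℕ, 1 ≤ i → i ≤ k → ∀ θ : ℝ, ξ i θ = c i + θ)
    (hηmono : ∀ i : ℕ, 1 ≤ i → i < k → η i < η (i + 1))
    (hcmono : ∀ i : ℕ, 1 ≤ i → i < k → c i < c (i + 1))
    (hηlast : η (k + 1) = t)
    (horder₁ : ∀ θ ∈ Set.Ioo A B, ∀ i ≤ k, ξ i θ < η (i + 1))
    (horder₂ : ∀ θ ∈ Set.Ioo A B, ∀ i : ℕ, 1 ≤ i → i ≤ k → η i < ξ i θ)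
    (hhC1 : ∀ i : ℕ, 1 ≤ i → i ≤ k + 1 →
      ContDiffOn ℝ 1 (fun q : ℝ × ℝ => h i q.1 q.2) (Set.univ ×ˢ Set.Ioo A B))
    (hg : ∀ i : ℕ, 1 ≤ i → i ≤ k → Continuous (g i))
    (hfgreen : ∀ θ ∈ Set.Ioo A B, ∀ i : ℕ, 1 ≤ i → i ≤ k + 1 → ∀ τ : ℝ,
      ξ (i - 1) θ ≤ τ → τ < η i → f τ θ = h i τ θ)
    (hfred : ∀ θ ∈ Set.Ioo A B, ∀ i : ℕ, 1 ≤ i → i ≤ k → ∀ τ : ℝ,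
      η i ≤ τ → τ < ξ i θ → f τ θ = g i τ)
    (hcont : ∀ θ ∈ Set.Ioo A B, ∀ i : ℕ, 1 ≤ i → i ≤ k → h i (η i) θ = g i (η i)) :
    ∀ θ ∈ Set.Ioo A B,
      HasDerivAt (fun θ' => ∫ τ in (p θ')..t, f τ θ')
        (-(h 1 (p θ) θ * p' θ)
          + ∑ i ∈ Finset.Icc 1 k, (g i (ξ i θ) - h (i + 1) (ξ i θ) θ)
          + ∑ i ∈ Finset.Icc 1 (k + 1),
              ∫ τ in (ξ (i - 1) θ)..(η i), deriv (fun θ'' => h i τ θ'') θ)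
        θ := by
  intro θ₀ hθ₀
  -- continuity of slices of h
  have hhc : ∀ i : ℕ, 1 ≤ i → i ≤ k + 1 → ∀ θ'' ∈ Set.Ioo A B,
      Continuous (fun τ => h i τ θ'') := by
    intro i h1 h2 θ'' hθ''
    rw [← continuousOn_univ]
    exact (hhC1 i h1 h2).continuousOn.comp (Continuous.continuousOn (continuous_id.prodMk continuous_const))
      (fun τ _ => ⟨Set.mem_univ _, hθ''⟩)
  -- DECOMPOSITION
  have hdecomp : ∀ θ' ∈ Set.Ioo A B,
      (∫ τ in (p θ')..t, f τ θ') =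
        (∑ i ∈ Finset.Icc 1 (k+1), ∫ τ in (ξ (i-1) θ')..(η i), h i τ θ') +
         ∑ i ∈ Finset.Icc 1 k, ∫ τ in (η i)..(ξ i θ'), g i τ := by
    intro θ' hθ'
    set bp : ℕ → ℝ := fun j => if Even j then ξ (j/2) θ' else η ((j+1)/2) with hbp_def
    have hbp_even : ∀ m : ℕ, bp (2*m) = ξ m θ' := by
      intro m
      show (if Even (2*m) then ξ ((2*m)/2) θ' else η ((2*m+1)/2)) = ξ m θ'
      rw [if_pos (even_two_mul m)]
      congr 1; omega
    have hbp_odd : ∀ m : ℕ, bp (2*m+1) = η (m+1) := by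
      intro m
      show (if Even (2*m+1) then ξ ((2*m+1)/2) θ' else η ((2*m+1+1)/2)) = η (m+1)
      rw [if_neg (by simp [Nat.even_add_one, parity_simps])]
      congr 1; omega
    -- even segments
    have hseg_even : ∀ m ≤ k,
        IntervalIntegrable (fun τ => f τ θ') volume (ξ m θ') (η (m+1)) ∧
        (∫ τ in (ξ m θ')..(η (m+1)), f τ θ') = ∫ τ in (ξ m θ')..(η (m+1)), h (m+1) τ θ' := by
      intro m hm
      refine intervalIntegrable_and_integral_congr_Ioo (le_of_lt (horder₁ θ' hθ' m hm)) ?_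
        (((hhc (m+1) (by omega) (by omega) θ' hθ')).intervalIntegrable _ _)
      intro x hx
      have : ξ ((m+1) - 1) θ' ≤ x := by
        simpa using hx.1.le
      exact hfgreen θ' hθ' (m+1) (by omega) (by omega) x this hx.2
    have hseg_odd : ∀ m : ℕ, m + 1 ≤ k →
        IntervalIntegrable (fun τ => f τ θ') volume (η (m+1)) (ξ (m+1) θ') ∧
        (∫ τ in (η (m+1))..(ξ (m+1) θ'), f τ θ') = ∫ τ in (η (m+1))..(ξ (m+1) θ'), g (m+1) τ := by
      intro m hm
      refine intervalIntegrable_and_integral_congr_Ioo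
        (le_of_lt (horder₂ θ' hθ' (m+1) (by omega) hm)) ?_
        ((hg (m+1) (by omega) hm).intervalIntegrable _ _)
      intro x hx
      exact hfred θ' hθ' (m+1) (by omega) hm x hx.1.le hx.2
    have hint : ∀ j < 2*k+1, IntervalIntegrable (fun τ => f τ θ') volume (bp j) (bp (j+1)) := by
      intro j hj
      rcases Nat.even_or_odd j with ⟨m, hm⟩ | ⟨m, hm⟩
      · have hjm : j = 2*m := by omega
        subst hjm
        rw [hbp_even m, show 2*m+1 = 2*m+1 from rfl, hbp_odd m]
        exact (hseg_even m (by omega)).1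
      · have hjm : j = 2*m+1 := by omega
        subst hjm
        rw [hbp_odd m, show 2*m+1+1 = 2*(m+1) from by ring, hbp_even (m+1)]
        exact (hseg_odd m (by omega)).1
    have h0 : bp 0 = p θ' := by
      show (if Even 0 then ξ (0/2) θ' else η ((0+1)/2)) = p θ'
      simp [hξ0]
    have hlast : bp (2*k+1) = t := by rw [hbp_odd k, hηlast]
    have hchain := intervalIntegral.sum_integral_adjacent_intervals (a := bp)
      (n := 2*k+1) (μ := volume) (f := fun τ => f τ θ') hint
    rw [h0, hlast] at hchain
    rw [← hchain, sum_even_odd]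
    congr 1
    · rw [sum_Icc_one]
      refine Finset.sum_congr rfl ?_
      intro m hm
      rw [hbp_even m, hbp_odd m, (hseg_even m (by simpa using Nat.lt_succ_iff.1 (Finset.mem_range.1 hm))).2]
      have e1 : 1 + m = m + 1 := by omega
      rw [e1]
      norm_num
    · rw [sum_Icc_one']
      refine Finset.sum_congr rfl ?_
      intro m hm
      have hmk : m + 1 ≤ k := Finset.mem_range.1 hm
      rw [hbp_odd m, show 2*m+1+1 = 2*(m+1) from by ring, hbp_even (m+1),
        (hseg_odd m hmk).2]
      have e1 : 1 + m = m + 1 := by omega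
      rw [e1]
  -- derivatives of green terms
  have hGder : ∀ i ∈ Finset.Icc 1 (k+1),
      HasDerivAt (fun θ' => ∫ τ in (ξ (i-1) θ')..(η i), h i τ θ')
        (-(h i (ξ (i-1) θ₀) θ₀ * (if i = 1 then p' θ₀ else 1)) +
          ∫ τ in (ξ (i-1) θ₀)..(η i), deriv (fun θ'' => h i τ θ'') θ₀) θ₀ := by
    intro i hi
    obtain ⟨h1, h2⟩ := Finset.mem_Icc.1 hi
    have hξder : HasDerivAt (ξ (i-1)) (if i = 1 then p' θ₀ else 1) θ₀ := by
      rcases eq_or_ne i 1 with rfl | hne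
      · rw [if_pos rfl]
        have he : ξ 0 = p := funext hξ0
        rw [show (1:ℕ)-1 = 0 from rfl, he]
        exact hp θ₀ hθ₀
      · rw [if_neg hne]
        have he : ξ (i-1) = fun θ => c (i-1) + θ :=
          funext (hξc (i-1) (by omega) (by omega))
        rw [he]
        simpa using (hasDerivAt_id θ₀).const_add (c (i-1))
    exact leibniz_left hθ₀ (hhC1 i h1 h2) hξder (η i)
  -- derivatives of red terms
  have hRder : ∀ i ∈ Finset.Icc 1 k,
      HasDerivAt (fun θ' => ∫ τ in (η i)..(ξ i θ'), g i τ) (g i (ξ i θ₀)) θ₀ := by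
    intro i hi
    obtain ⟨h1, h2⟩ := Finset.mem_Icc.1 hi
    have hgc := hg i h1 h2
    have hφ : HasDerivAt (fun u => ∫ τ in (η i)..u, g i τ) (g i (c i + θ₀)) (c i + θ₀) :=
      intervalIntegral.integral_hasDerivAt_right (hgc.intervalIntegrable _ _)
        hgc.stronglyMeasurable.stronglyMeasurableAtFilter hgc.continuousAt
    have hl : HasDerivAt (fun θ' : ℝ => c i + θ') 1 θ₀ := by
      simpa using (hasDerivAt_id θ₀).const_add (c i)
    have hcomp := hφ.comp θ₀ hl
    have hfun : (fun θ' => ∫ τ in (η i)..(ξ i θ'), g i τ) =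
        (fun u => ∫ τ in (η i)..u, g i τ) ∘ (fun θ' : ℝ => c i + θ') := by
      funext θ'
      simp [hξc i h1 h2 θ']
    rw [hfun, hξc i h1 h2 θ₀]
    simpa using hcomp
  have htotal := (HasDerivAt.sum hGder).add (HasDerivAt.sum hRder)
  have hXeq : (fun θ' => ∫ τ in (p θ')..t, f τ θ') =ᶠ[nhds θ₀]
      (fun θ' => (∑ i ∈ Finset.Icc 1 (k+1), ∫ τ in (ξ (i-1) θ')..(η i), h i τ θ') +
        ∑ i ∈ Finset.Icc 1 k, ∫ τ in (η i)..(ξ i θ'), g i τ) := by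
    filter_upwards [isOpen_Ioo.mem_nhds hθ₀] with θ' hθ'
    exact hdecomp θ' hθ'
  have hX := htotal.congr_of_eventuallyEq
    (hXeq.trans (Filter.Eventually.of_forall fun θ' => by simp [Finset.sum_apply]))
  refine hX.congr_deriv (Eq.symm ?_)
  rw [Finset.sum_add_distrib]
  have hA : ∑ i ∈ Finset.Icc 1 (k+1), (-(h i (ξ (i-1) θ₀) θ₀ * (if i = 1 then p' θ₀ else 1)))
      = -(h 1 (p θ₀) θ₀ * p' θ₀) + ∑ i ∈ Finset.range k, (-(h (i+2) (ξ (i+1) θ₀) θ₀)) := by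
    rw [sum_Icc_one, Finset.sum_range_succ']
    rw [add_comm]
    congr 1
    · norm_num [hξ0]
    · apply Finset.sum_congr rfl
      intro i _
      have e : 1 + (i+1) = i + 2 := by omega
      rw [e, if_neg (by omega)]
      norm_num
  have hB : ∑ i ∈ Finset.Icc 1 k, (g i (ξ i θ₀) - h (i + 1) (ξ i θ₀) θ₀)
      = (∑ i ∈ Finset.range k, g (1+i) (ξ (1+i) θ₀))
        - ∑ i ∈ Finset.range k, h (i+2) (ξ (i+1) θ₀) θ₀ := by
    rw [sum_Icc_one', ← Finset.sum_sub_distrib]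
    apply Finset.sum_congr rfl
    intro i _
    have e : 1 + i + 1 = i + 2 := by omega
    have e2 : 1 + i = i + 1 := by omega
    rw [e, e2]
  have hC : ∑ i ∈ Finset.Icc 1 k, g i (ξ i θ₀)
      = ∑ i ∈ Finset.range k, g (1+i) (ξ (1+i) θ₀) := sum_Icc_one' k _
  rw [hA, hB, hC, Finset.sum_neg_distrib]
  ring
end

section
/- Fix θ₀ ∈ ℝ and an open interval I ∋ θ₀, reals a < η, an integer m ≥ 2, constants φ, c ∈ ℝ, a continuously differentiable b : ℝ → ℝ, and continuous α₁, g : ℝ → ℝ. Let e₁,…,e_{m−1} and b₂,…,b_m be differentiable functions from I to ℝ with a < e₁(θ) < b₂(θ) < e₂(θ) < ⋯ < e_{m−1}(θ) < b_m(θ) < η for all θ ∈ I. Define f : ℝ × I → ℝ by f(τ,θ) := φ·b(τ − c − θ) + g(τ) on the 'busy' pieces [a, e₁(θ)), [b_j(θ), e_j(θ)) for j = 2,…,m−1, and [b_m(θ), η], and f(τ,θ) := φ·α₁(τ) + g(τ) on the 'empty' pieces [e_j(θ), b_{j+1}(θ)) for j = 1,…,m−1. Assume: (H1) for each j = 2,…,m−1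 and all θ ∈ I, ∫_{b_j(θ)}^{e_j(θ)} ( α₁(τ) − b(τ − c − θ) ) dτ = 0; (H2) there exist differentiable ξ, X : I → ℝ with ξ(θ₀) = a and ∫_{ξ(θ)}^{e₁(θ)} ( α₁(τ) − b(τ − c − θ) ) dτ = −X(θ) for all θ ∈ I; (H3) for each j = 2,…,m, either b_j′(θ₀) = 0 or α₁(b_j(θ₀)) = b(b_j(θ₀) − c − θ₀). Then F(θ) := ∫_{a}^{η} f(τ,θ) dτ is differentiable at θ₀, and F′(θ₀) = φ·[ X′(θ₀) − ( α₁(a) − b(a − c − θ₀) )·ξ′(θ₀) + b(b_m(θ₀) − c − θ₀) − b(η − c − θ₀) ]. -/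
open MeasureTheory intervalIntegral

/-- If `f` agrees with a continuous `g` on the open interval `(x, y)`, then `f` is
interval integrable on `[x, y]` and has the same interval integral as `g`. -/
lemma traffic_piece_helper {f g : ℝ → ℝ} {x y : ℝ} (hxy : x ≤ y) (hg : Continuous g)
    (h : ∀ τ, x < τ → τ < y → f τ = g τ) :
    IntervalIntegrable f volume x y ∧ (∫ τ in x..y, f τ) = ∫ τ in x..y, g τ := by
  have hsub : {τ : ℝ | ¬ (τ ∈ Set.Ioc x y → f τ = g τ)} ⊆ {y} := by
    intro τ hτ
    simp only [Set.mem_setOf_eq] at hτ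
    push_neg at hτ
    obtain ⟨⟨h1, h2⟩, h3⟩ := hτ
    by_contra hne
    exact h3 (h τ h1 (lt_of_le_of_ne h2 (by simpa using hne)))
  have hnull : volume {τ : ℝ | ¬ (τ ∈ Set.Ioc x y → f τ = g τ)} = 0 :=
    measure_mono_null hsub (measure_singleton y)
  have hae : ∀ᵐ τ : ℝ, τ ∈ Set.uIoc x y → f τ = g τ := by
    rw [Set.uIoc_of_le hxy]
    exact (MeasureTheory.ae_iff).2 hnull
  constructor
  · rw [intervalIntegrable_iff]
    have hgi : IntegrableOn g (Set.uIoc x y) volume :=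
      intervalIntegrable_iff.1 (hg.intervalIntegrable x y)
    exact hgi.congr ((ae_restrict_iff' measurableSet_uIoc).2
      (hae.mono fun τ hτ h' => (hτ h').symm))
  · exact intervalIntegral.integral_congr_ae hae

/-- Lemma 2(II.i), Eq. (20): over a green period [a,η] of the
upstream light partitioned into q1-busy pieces [a, e₁(θ)), [b_j(θ), e_j(θ))
(j = 2,…,m−1), [b_m(θ), η] — on which f(τ,θ) = φ·b(τ−c−θ) + g(τ) — and q1-empty
pieces [e_j(θ), b_{j+1}(θ)) — on which f(τ,θ) = φ·α₁(τ) + g(τ) — with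
(H1) each interior busy period integrating net flow to zero,
(H2) ∫_{ξ(θ)}^{e₁(θ)} (α₁ − b(·−c−θ)) = −X(θ) with ξ(θ₀) = a, and
(H3) each busy-period start b_j satisfying b_j′(θ₀) = 0 or α₁(b_j(θ₀)) =
b(b_j(θ₀)−c−θ₀), the function F(θ) = ∫_a^η f(τ,θ) dτ is differentiable at θ₀
with F′(θ₀) = φ·[ X′(θ₀) − (α₁(a) − b(a−c−θ₀))·ξ′(θ₀)
                  + b(b_m(θ₀)−c−θ₀) − b(η−c−θ₀) ]. -/
theorem traffic_lemma2_part_IIi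
    (A B θ₀ : ℝ) (hθ₀ : θ₀ ∈ Set.Ioo A B)
    (a η : ℝ) (haη : a < η) (m : ℕ) (hm : 2 ≤ m) (φ c : ℝ)
    (b : ℝ → ℝ) (hb : ContDiff ℝ 1 b)
    (α₁ g : ℝ → ℝ) (hα₁ : Continuous α₁) (hg : Continuous g)
    (ee bb ee' bb' : ℕ → ℝ → ℝ)
    (heed : ∀ j : ℕ, 1 ≤ j → j ≤ m - 1 → ∀ θ ∈ Set.Ioo A B,
      HasDerivAt (ee j) (ee' j θ) θ)
    (hbbd : ∀ j : ℕ, 2 ≤ j → j ≤ m → ∀ θ ∈ Set.Ioo A B,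
      HasDerivAt (bb j) (bb' j θ) θ)
    (horder : ∀ θ ∈ Set.Ioo A B,
      a < ee 1 θ ∧
      (∀ j : ℕ, 1 ≤ j → j ≤ m - 1 → ee j θ < bb (j + 1) θ) ∧
      (∀ j : ℕ, 2 ≤ j → j ≤ m - 1 → bb j θ < ee j θ) ∧
      bb m θ < η)
    (f : ℝ → ℝ → ℝ)
    (hf₁ : ∀ θ ∈ Set.Ioo A B, ∀ τ : ℝ, a ≤ τ → τ < ee 1 θ →
      f τ θ = φ * b (τ - c - θ) + g τ)
    (hf₂ : ∀ θ ∈ Set.Ioo A B, ∀ j : ℕ, 2 ≤ j → j ≤ m - 1 → ∀ τ : ℝ,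
      bb j θ ≤ τ → τ < ee j θ → f τ θ = φ * b (τ - c - θ) + g τ)
    (hf₃ : ∀ θ ∈ Set.Ioo A B, ∀ τ : ℝ, bb m θ ≤ τ → τ ≤ η →
      f τ θ = φ * b (τ - c - θ) + g τ)
    (hf₄ : ∀ θ ∈ Set.Ioo A B, ∀ j : ℕ, 1 ≤ j → j ≤ m - 1 → ∀ τ : ℝ,
      ee j θ ≤ τ → τ < bb (j + 1) θ → f τ θ = φ * α₁ τ + g τ)
    (H1 : ∀ θ ∈ Set.Ioo A B, ∀ j : ℕ, 2 ≤ j → j ≤ m - 1 →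
      ∫ τ in (bb j θ)..(ee j θ), (α₁ τ - b (τ - c - θ)) = 0)
    (ξ X ξ' X' : ℝ → ℝ)
    (hξd : ∀ θ ∈ Set.Ioo A B, HasDerivAt ξ (ξ' θ) θ)
    (hXd : ∀ θ ∈ Set.Ioo A B, HasDerivAt X (X' θ) θ)
    (hξa : ξ θ₀ = a)
    (H2 : ∀ θ ∈ Set.Ioo A B,
      ∫ τ in (ξ θ)..(ee 1 θ), (α₁ τ - b (τ - c - θ)) = - X θ)
    (H3 : ∀ j : ℕ, 2 ≤ j → j ≤ m →
      bb' j θ₀ = 0 ∨ α₁ (bb j θ₀) = b (bb j θ₀ - c - θ₀)) :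
    HasDerivAt (fun θ => ∫ τ in a..η, f τ θ)
      (φ * (X' θ₀ - (α₁ a - b (a - c - θ₀)) * ξ' θ₀
            + b (bb m θ₀ - c - θ₀) - b (η - c - θ₀))) θ₀ := by
  have hbc : Continuous b := hb.continuous
  have hcontb : ∀ θ : ℝ, Continuous (fun τ : ℝ => b (τ - c - θ)) :=
    fun θ => hbc.comp ((continuous_id.sub continuous_const).sub continuous_const)
  have hcontF : ∀ θ : ℝ, Continuous (fun τ : ℝ => φ * b (τ - c - θ) + g τ) :=
    fun θ => (continuous_const.mul (hcontb θ)).add hg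
  have hcontA : Continuous (fun τ : ℝ => φ * α₁ τ + g τ) :=
    (continuous_const.mul hα₁).add hg
  have hcontD : ∀ θ : ℝ, Continuous (fun τ : ℝ => α₁ τ - b (τ - c - θ)) :=
    fun θ => hα₁.sub (hcontb θ)
  -- Step 1: closed form of the integral on Ioo A B
  have key : ∀ θ ∈ Set.Ioo A B, (∫ τ in a..η, f τ θ) =
      (∫ τ in a..η, (φ * b (τ - c - θ) + g τ)) + φ * X θ
        + φ * ∫ τ in (ξ θ)..(bb m θ), (α₁ τ - b (τ - c - θ)) := by
    intro θ hθ
    obtain ⟨ho1, ho2, ho3, ho4⟩ := horder θ hθ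
    have main : ∀ k, 1 ≤ k → k ≤ m - 1 →
        IntervalIntegrable (fun τ => f τ θ) volume a (ee k θ) ∧
        (∫ τ in a..(ee k θ), f τ θ) =
          (∫ τ in a..(ee k θ), (φ * b (τ - c - θ) + g τ))
            + φ * ∫ τ in (ee 1 θ)..(ee k θ), (α₁ τ - b (τ - c - θ)) := by
      intro k hk
      induction k, hk using Nat.le_induction with
      | base =>
        intro _
        obtain ⟨hi, he⟩ := traffic_piece_helper ho1.le (hcontF θ)
          (fun τ h1 h2 => hf₁ θ hθ τ h1.le h2)
        refine ⟨hi, ?_⟩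
        rw [he, intervalIntegral.integral_same, mul_zero, add_zero]
      | succ k hk ih =>
        intro hk1
        have hkm : k ≤ m - 1 := le_trans (Nat.le_succ k) hk1
        obtain ⟨ihI, ihE⟩ := ih hkm
        have hEB : ee k θ < bb (k + 1) θ := ho2 k hk hkm
        have hBE : bb (k + 1) θ < ee (k + 1) θ := ho3 (k + 1) (by omega) hk1
        obtain ⟨hI1, hE1⟩ := traffic_piece_helper hEB.le hcontA
          (fun τ h1 h2 => hf₄ θ hθ k hk hkm τ h1.le h2)
        obtain ⟨hI2, hE2⟩ := traffic_piece_helper hBE.le (hcontF θ)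
          (fun τ h1 h2 => hf₂ θ hθ (k + 1) (by omega) hk1 τ h1.le h2)
        refine ⟨(ihI.trans hI1).trans hI2, ?_⟩
        have add1 := integral_add_adjacent_intervals ihI hI1
        have add2 := integral_add_adjacent_intervals (ihI.trans hI1) hI2
        have fadd1 := integral_add_adjacent_intervals (μ := volume)
          ((hcontF θ).intervalIntegrable a (ee k θ))
          ((hcontF θ).intervalIntegrable (ee k θ) (bb (k + 1) θ))
        have fadd2 := integral_add_adjacent_intervals (μ := volume)
          ((hcontF θ).intervalIntegrable a (bb (k + 1) θ))
          ((hcontF θ).intervalIntegrable (bb (k + 1) θ) (ee (k + 1) θ))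
        have dadd1 := integral_add_adjacent_intervals (μ := volume)
          ((hcontD θ).intervalIntegrable (ee 1 θ) (ee k θ))
          ((hcontD θ).intervalIntegrable (ee k θ) (bb (k + 1) θ))
        have dadd2 := integral_add_adjacent_intervals (μ := volume)
          ((hcontD θ).intervalIntegrable (ee 1 θ) (bb (k + 1) θ))
          ((hcontD θ).intervalIntegrable (bb (k + 1) θ) (ee (k + 1) θ))
        have dadd1' : φ * (∫ τ in (ee 1 θ)..(ee k θ), (α₁ τ - b (τ - c - θ)))
            + φ * (∫ τ in (ee k θ)..(bb (k + 1) θ), (α₁ τ - b (τ - c - θ)))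
            = φ * ∫ τ in (ee 1 θ)..(bb (k + 1) θ), (α₁ τ - b (τ - c - θ)) := by
          rw [← mul_add, dadd1]
        have dadd2' : φ * (∫ τ in (ee 1 θ)..(bb (k + 1) θ), (α₁ τ - b (τ - c - θ)))
            + φ * (∫ τ in (bb (k + 1) θ)..(ee (k + 1) θ), (α₁ τ - b (τ - c - θ)))
            = φ * ∫ τ in (ee 1 θ)..(ee (k + 1) θ), (α₁ τ - b (τ - c - θ)) := by
          rw [← mul_add, dadd2]
        have h10 : φ * (∫ τ in (bb (k + 1) θ)..(ee (k + 1) θ), (α₁ τ - b (τ - c - θ))) = 0 := by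
          rw [H1 θ hθ (k + 1) (by omega) hk1, mul_zero]
        have hsplit : (∫ τ in (ee k θ)..(bb (k + 1) θ), (φ * α₁ τ + g τ)) =
            (∫ τ in (ee k θ)..(bb (k + 1) θ), (φ * b (τ - c - θ) + g τ))
              + φ * ∫ τ in (ee k θ)..(bb (k + 1) θ), (α₁ τ - b (τ - c - θ)) := by
          rw [← intervalIntegral.integral_const_mul,
            ← intervalIntegral.integral_add ((hcontF θ).intervalIntegrable _ _)
              (Continuous.intervalIntegrable (μ := volume) (continuous_const.fun_mul (hcontD θ)) _ _)]
          apply intervalIntegral.integral_congr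
          intro τ _
          ring
        linarith [add1, add2, ihE, hE1, hE2, hsplit, fadd1, fadd2, dadd1', dadd2', h10]
    obtain ⟨hIm, hEm⟩ := main (m - 1) (by omega) le_rfl
    have hm1 : m - 1 + 1 = m := by omega
    have h4 := hf₄ θ hθ (m - 1) (by omega) le_rfl
    rw [hm1] at h4
    have hEBm : ee (m - 1) θ < bb m θ := by
      have := ho2 (m - 1) (by omega) le_rfl
      rwa [hm1] at this
    obtain ⟨hIe, hEe⟩ := traffic_piece_helper hEBm.le hcontA
      (fun τ h1 h2 => h4 τ h1.le h2)
    obtain ⟨hIb, hEb⟩ := traffic_piece_helper ho4.le (hcontF θ)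
      (fun τ h1 h2 => hf₃ θ hθ τ h1.le h2.le)
    have addE := integral_add_adjacent_intervals hIm hIe
    have addB := integral_add_adjacent_intervals (hIm.trans hIe) hIb
    have faddE := integral_add_adjacent_intervals (μ := volume)
      ((hcontF θ).intervalIntegrable a (ee (m - 1) θ))
      ((hcontF θ).intervalIntegrable (ee (m - 1) θ) (bb m θ))
    have faddB := integral_add_adjacent_intervals (μ := volume)
      ((hcontF θ).intervalIntegrable a (bb m θ))
      ((hcontF θ).intervalIntegrable (bb m θ) η)
    have dadd := integral_add_adjacent_intervals (μ := volume)
      ((hcontD θ).intervalIntegrable (ee 1 θ) (ee (m - 1) θ))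
      ((hcontD θ).intervalIntegrable (ee (m - 1) θ) (bb m θ))
    have dadd' : φ * (∫ τ in (ee 1 θ)..(ee (m - 1) θ), (α₁ τ - b (τ - c - θ)))
        + φ * (∫ τ in (ee (m - 1) θ)..(bb m θ), (α₁ τ - b (τ - c - θ)))
        = φ * ∫ τ in (ee 1 θ)..(bb m θ), (α₁ τ - b (τ - c - θ)) := by
      rw [← mul_add, dadd]
    have hsplit : (∫ τ in (ee (m - 1) θ)..(bb m θ), (φ * α₁ τ + g τ)) =
        (∫ τ in (ee (m - 1) θ)..(bb m θ), (φ * b (τ - c - θ) + g τ))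
          + φ * ∫ τ in (ee (m - 1) θ)..(bb m θ), (α₁ τ - b (τ - c - θ)) := by
      rw [← intervalIntegral.integral_const_mul,
        ← intervalIntegral.integral_add ((hcontF θ).intervalIntegrable _ _)
          (Continuous.intervalIntegrable (μ := volume) (continuous_const.fun_mul (hcontD θ)) _ _)]
      apply intervalIntegral.integral_congr
      intro τ _
      ring
    have hxadd := integral_add_adjacent_intervals (μ := volume)
      ((hcontD θ).intervalIntegrable (ee 1 θ) (ξ θ))
      ((hcontD θ).intervalIntegrable (ξ θ) (bb m θ))
    have hsym : (∫ τ in (ee 1 θ)..(ξ θ), (α₁ τ - b (τ - c - θ))) = X θ := by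
      rw [intervalIntegral.integral_symm, H2 θ hθ]
      ring
    have hx : φ * (∫ τ in (ee 1 θ)..(bb m θ), (α₁ τ - b (τ - c - θ)))
        = φ * X θ + φ * ∫ τ in (ξ θ)..(bb m θ), (α₁ τ - b (τ - c - θ)) := by
      rw [← hxadd, hsym, mul_add]
    linarith [addE, addB, hEm, hEe, hEb, hsplit, faddE, faddB, dadd', hx]
  -- Step 2: antiderivatives
  set Bi : ℝ → ℝ := fun x => ∫ t in (0:ℝ)..x, b t with hBidef
  set Ai : ℝ → ℝ := fun x => ∫ t in (0:ℝ)..x, α₁ t with hAidef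
  have hBi : ∀ x : ℝ, HasDerivAt Bi (b x) x := fun x =>
    intervalIntegral.integral_hasDerivAt_right (hbc.intervalIntegrable 0 x)
      (hbc.stronglyMeasurableAtFilter volume (nhds x)) hbc.continuousAt
  have hAi : ∀ x : ℝ, HasDerivAt Ai (α₁ x) x := fun x =>
    intervalIntegral.integral_hasDerivAt_right (hα₁.intervalIntegrable 0 x)
      (hα₁.stronglyMeasurableAtFilter volume (nhds x)) hα₁.continuousAt
  have hintb : ∀ u v w : ℝ, (∫ τ in u..v, b (τ - w)) = Bi (v - w) - Bi (u - w) := by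
    intro u v w
    rw [intervalIntegral.integral_comp_sub_right b w]
    exact (integral_interval_sub_left (hbc.intervalIntegrable 0 (v - w))
      (hbc.intervalIntegrable 0 (u - w))).symm
  have hintA : ∀ u v : ℝ, (∫ τ in u..v, α₁ τ) = Ai v - Ai u := fun u v =>
    (integral_interval_sub_left (hα₁.intervalIntegrable 0 v)
      (hα₁.intervalIntegrable 0 u)).symm
  have key2 : ∀ θ ∈ Set.Ioo A B, (∫ τ in a..η, f τ θ) =
      φ * (Bi (η - c - θ) - Bi (a - c - θ)) + (∫ τ in a..η, g τ) + φ * X θ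
        + φ * ((Ai (bb m θ) - Ai (ξ θ))
              - (Bi (bb m θ - c - θ) - Bi (ξ θ - c - θ))) := by
    intro θ hθ
    rw [key θ hθ]
    have e1 : (∫ τ in a..η, (φ * b (τ - c - θ) + g τ)) =
        φ * (Bi (η - c - θ) - Bi (a - c - θ)) + ∫ τ in a..η, g τ := by
      rw [intervalIntegral.integral_add
        ((continuous_const.fun_mul (hcontb θ)).intervalIntegrable _ _)
        (hg.intervalIntegrable _ _), intervalIntegral.integral_const_mul]
      have hb1 : (∫ τ in a..η, b (τ - c - θ)) = Bi (η - c - θ) - Bi (a - c - θ) := by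
        simp only [sub_sub]
        exact hintb a η (c + θ)
      rw [hb1]
    have e2 : (∫ τ in (ξ θ)..(bb m θ), (α₁ τ - b (τ - c - θ))) =
        (Ai (bb m θ) - Ai (ξ θ)) - (Bi (bb m θ - c - θ) - Bi (ξ θ - c - θ)) := by
      rw [intervalIntegral.integral_sub (hα₁.intervalIntegrable _ _)
        ((hcontb θ).intervalIntegrable _ _), hintA]
      have hb2 : (∫ τ in (ξ θ)..(bb m θ), b (τ - c - θ)) =
          Bi (bb m θ - c - θ) - Bi (ξ θ - c - θ) := by
        simp only [sub_sub]
        exact hintb (ξ θ) (bb m θ) (c + θ)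
      rw [hb2]
    rw [e1, e2]
  -- Step 3: differentiate the closed form
  have hbm' : HasDerivAt (bb m) (bb' m θ₀) θ₀ := hbbd m (by omega) le_rfl θ₀ hθ₀
  have hxi' : HasDerivAt ξ (ξ' θ₀) θ₀ := hξd θ₀ hθ₀
  have hX'' : HasDerivAt X (X' θ₀) θ₀ := hXd θ₀ hθ₀
  have h1 : HasDerivAt (fun θ => Bi (η - c - θ)) (b (η - c - θ₀) * (-1)) θ₀ := by
    have hin : HasDerivAt (fun θ : ℝ => η - c - θ) (-1) θ₀ := by
      simpa using (hasDerivAt_id θ₀).const_sub (η - c)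
    simpa [Function.comp_def] using (hBi (η - c - θ₀)).comp θ₀ hin
  have h2 : HasDerivAt (fun θ => Bi (a - c - θ)) (b (a - c - θ₀) * (-1)) θ₀ := by
    have hin : HasDerivAt (fun θ : ℝ => a - c - θ) (-1) θ₀ := by
      simpa using (hasDerivAt_id θ₀).const_sub (a - c)
    simpa [Function.comp_def] using (hBi (a - c - θ₀)).comp θ₀ hin
  have h3 : HasDerivAt (fun θ => Ai (bb m θ)) (α₁ (bb m θ₀) * bb' m θ₀) θ₀ := by
    simpa [Function.comp_def] using (hAi (bb m θ₀)).comp θ₀ hbm'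
  have h4 : HasDerivAt (fun θ => Ai (ξ θ)) (α₁ (ξ θ₀) * ξ' θ₀) θ₀ := by
    simpa [Function.comp_def] using (hAi (ξ θ₀)).comp θ₀ hxi'
  have h5 : HasDerivAt (fun θ => Bi (bb m θ - c - θ))
      (b (bb m θ₀ - c - θ₀) * (bb' m θ₀ - 1)) θ₀ := by
    have hin : HasDerivAt (fun θ : ℝ => bb m θ - c - θ) (bb' m θ₀ - 1) θ₀ := by
      simpa using (hbm'.sub_const c).fun_sub (hasDerivAt_id' θ₀)
    simpa [Function.comp_def] using (hBi _).comp θ₀ hin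
  have h6 : HasDerivAt (fun θ => Bi (ξ θ - c - θ))
      (b (ξ θ₀ - c - θ₀) * (ξ' θ₀ - 1)) θ₀ := by
    have hin : HasDerivAt (fun θ : ℝ => ξ θ - c - θ) (ξ' θ₀ - 1) θ₀ := by
      simpa using (hxi'.sub_const c).fun_sub (hasDerivAt_id' θ₀)
    simpa [Function.comp_def] using (hBi _).comp θ₀ hin
  have hG : HasDerivAt (fun θ =>
      φ * (Bi (η - c - θ) - Bi (a - c - θ)) + (∫ τ in a..η, g τ) + φ * X θ
        + φ * ((Ai (bb m θ) - Ai (ξ θ))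
              - (Bi (bb m θ - c - θ) - Bi (ξ θ - c - θ))))
      (φ * (b (η - c - θ₀) * (-1) - b (a - c - θ₀) * (-1)) + φ * X' θ₀
        + φ * ((α₁ (bb m θ₀) * bb' m θ₀ - α₁ (ξ θ₀) * ξ' θ₀)
              - (b (bb m θ₀ - c - θ₀) * (bb' m θ₀ - 1)
                 - b (ξ θ₀ - c - θ₀) * (ξ' θ₀ - 1)))) θ₀ :=
    ((((h1.sub h2).const_mul φ).add_const _).add (hX''.const_mul φ)).add
      (((h3.sub h4).sub (h5.sub h6)).const_mul φ)
  rw [hξa] at hG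
  have hd : (φ * (b (η - c - θ₀) * (-1) - b (a - c - θ₀) * (-1)) + φ * X' θ₀
        + φ * ((α₁ (bb m θ₀) * bb' m θ₀ - α₁ a * ξ' θ₀)
              - (b (bb m θ₀ - c - θ₀) * (bb' m θ₀ - 1)
                 - b (a - c - θ₀) * (ξ' θ₀ - 1)))) =
      φ * (X' θ₀ - (α₁ a - b (a - c - θ₀)) * ξ' θ₀
            + b (bb m θ₀ - c - θ₀) - b (η - c - θ₀)) := by
    rcases H3 m (by omega) le_rfl with h | h
    · rw [h]; ring
    · rw [h]; ring
  rw [hd] at hG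
  exact hG.congr_of_eventuallyEq
    (Filter.eventuallyEq_of_mem (isOpen_Ioo.mem_nhds hθ₀) (fun θ hθ => key2 θ hθ))
end

section
/- Fix θ₀ ∈ ℝ and an open interval I ∋ θ₀, reals a < η, an integer m ≥ 1, constants φ, c ∈ ℝ, a continuously differentiable b : ℝ → ℝ, and continuous α₁, g : ℝ → ℝ. Let b₁,…,b_m and e₁,…,e_{m−1} be differentiable functions from I to ℝ with a < b₁(θ) < e₁(θ) < b₂(θ) < ⋯ < e_{m−1}(θ) < b_m(θ) < η for all θ ∈ I. Define f : ℝ × I → ℝ by f(τ,θ) := φ·b(τ − c − θ) + g(τ) on the 'busy' pieces [b_j(θ), e_j(θ)) for j = 1,…,m−1 and [b_m(θ), η], and f(τ,θ) := φ·α₁(τ) + g(τ) on the 'empty' pieces [a, b₁(θ)) and [e_j(θ), b_{j+1}(θ)) for j = 1,…,m−1. Assume: (H1) for each j = 1,…,m−1 and all θ ∈ I, ∫_{b_j(θ)}^{e_j(θ)} ( α₁(τ) − b(τ − c − θ) ) dτ = 0; (H3) for each j = 1,…,m, either b_j′(θ₀) = 0 or α₁(b_j(θ₀)) = b(b_j(θ₀)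 − c − θ₀). Then F(θ) := ∫_{a}^{η} f(τ,θ) dτ is differentiable at θ₀, and F′(θ₀) = φ·( b(b_m(θ₀) − c − θ₀) − b(η − c − θ₀) ). -/
open MeasureTheory

lemma piece_aux {f h : ℝ → ℝ} (hh : Continuous h) {x y : ℝ} (hxy : x ≤ y)
    (heq : ∀ τ, x ≤ τ → τ < y → f τ = h τ) :
    IntervalIntegrable f volume x y ∧ ∫ τ in x..y, f τ = ∫ τ in x..y, h τ := by
  have hne : ∀ᵐ τ : ℝ, τ ≠ y := by
    have h0 : (volume ({y} : Set ℝ)) = 0 := measure_singleton y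
    filter_upwards [measure_eq_zero_iff_ae_notMem.mp h0] with τ hτ
    simpa using hτ
  constructor
  · rw [intervalIntegrable_iff_integrableOn_Ioc_of_le hxy]
    have hae : h =ᵐ[volume.restrict (Set.Ioc x y)] f := by
      filter_upwards [ae_restrict_mem measurableSet_Ioc, ae_restrict_of_ae hne] with τ h1 h2
      exact (heq τ h1.1.le (lt_of_le_of_ne h1.2 h2)).symm
    exact (hh.integrableOn_Ioc).congr hae
  · apply intervalIntegral.integral_congr_ae
    filter_upwards [hne] with τ hτ hmem
    rw [Set.uIoc_of_le hxy] at hmem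
    exact heq τ hmem.1.le (lt_of_le_of_ne hmem.2 hτ)

lemma ftc_deriv {h : ℝ → ℝ} (hh : Continuous h) (x₀ : ℝ) (u : ℝ) :
    HasDerivAt (fun v => ∫ t in x₀..v, h t) (h u) u :=
  intervalIntegral.integral_hasDerivAt_right (hh.intervalIntegrable _ _)
    (hh.stronglyMeasurableAtFilter _ _) hh.continuousAt



/-- Lemma 2(II.ii): over a green period [a,η] of the upstream
light whose left endpoint a lies in the interior of a q1-empty period, with
q1-busy pieces [b_j(θ), e_j(θ)) (j = 1,…,m−1) and [b_m(θ), η] — on which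
f(τ,θ) = φ·b(τ−c−θ) + g(τ) — and q1-empty pieces [a, b₁(θ)) and
[e_j(θ), b_{j+1}(θ)) — on which f(τ,θ) = φ·α₁(τ) + g(τ) — assuming
(H1) each complete busy period integrates net flow to zero, and
(H3) each busy-period start b_j satisfies b_j′(θ₀) = 0 or
α₁(b_j(θ₀)) = b(b_j(θ₀)−c−θ₀), the function F(θ) = ∫_a^η f(τ,θ) dτ is
differentiable at θ₀ with F′(θ₀) = φ·( b(b_m(θ₀)−c−θ₀) − b(η−c−θ₀) ). -/
theorem traffic_lemma2_part_IIii
    (A B θ₀ : ℝ) (hθ₀ : θ₀ ∈ Set.Ioo A B)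
    (a η : ℝ) (haη : a < η) (m : ℕ) (hm : 1 ≤ m) (φ c : ℝ)
    (b : ℝ → ℝ) (hb : ContDiff ℝ 1 b)
    (α₁ g : ℝ → ℝ) (hα₁ : Continuous α₁) (hg : Continuous g)
    (bb ee bb' ee' : ℕ → ℝ → ℝ)
    (hbbd : ∀ j : ℕ, 1 ≤ j → j ≤ m → ∀ θ ∈ Set.Ioo A B,
      HasDerivAt (bb j) (bb' j θ) θ)
    (heed : ∀ j : ℕ, 1 ≤ j → j ≤ m - 1 → ∀ θ ∈ Set.Ioo A B,
      HasDerivAt (ee j) (ee' j θ) θ)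
    (horder : ∀ θ ∈ Set.Ioo A B,
      a < bb 1 θ ∧
      (∀ j : ℕ, 1 ≤ j → j ≤ m - 1 → bb j θ < ee j θ ∧ ee j θ < bb (j + 1) θ) ∧
      bb m θ < η)
    (f : ℝ → ℝ → ℝ)
    (hf₁ : ∀ θ ∈ Set.Ioo A B, ∀ j : ℕ, 1 ≤ j → j ≤ m - 1 → ∀ τ : ℝ,
      bb j θ ≤ τ → τ < ee j θ → f τ θ = φ * b (τ - c - θ) + g τ)
    (hf₂ : ∀ θ ∈ Set.Ioo A B, ∀ τ : ℝ, bb m θ ≤ τ → τ ≤ η →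
      f τ θ = φ * b (τ - c - θ) + g τ)
    (hf₃ : ∀ θ ∈ Set.Ioo A B, ∀ τ : ℝ, a ≤ τ → τ < bb 1 θ →
      f τ θ = φ * α₁ τ + g τ)
    (hf₄ : ∀ θ ∈ Set.Ioo A B, ∀ j : ℕ, 1 ≤ j → j ≤ m - 1 → ∀ τ : ℝ,
      ee j θ ≤ τ → τ < bb (j + 1) θ → f τ θ = φ * α₁ τ + g τ)
    (H1 : ∀ θ ∈ Set.Ioo A B, ∀ j : ℕ, 1 ≤ j → j ≤ m - 1 →
      ∫ τ in (bb j θ)..(ee j θ), (α₁ τ - b (τ - c - θ)) = 0)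
    (H3 : ∀ j : ℕ, 1 ≤ j → j ≤ m →
      bb' j θ₀ = 0 ∨ α₁ (bb j θ₀) = b (bb j θ₀ - c - θ₀)) :
    HasDerivAt (fun θ => ∫ τ in a..η, f τ θ)
      (φ * (b (bb m θ₀ - c - θ₀) - b (η - c - θ₀))) θ₀ := by
  
  have hbC : Continuous b := hb.continuous
  have hcont1 : Continuous (fun t => φ * α₁ t + g t) := (continuous_const.mul hα₁).add hg
  -- antiderivatives
  set A1 : ℝ → ℝ := fun u => ∫ t in a..u, (φ * α₁ t + g t) with hA1def
  set Gi : ℝ → ℝ := fun u => ∫ t in a..u, g t with hGidef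
  set Bi : ℝ → ℝ := fun u => ∫ t in (0:ℝ)..u, b t with hBidef
  have hA1d : ∀ u, HasDerivAt A1 (φ * α₁ u + g u) u := ftc_deriv hcont1 a
  have hGid : ∀ u, HasDerivAt Gi (g u) u := ftc_deriv hg a
  have hBid : ∀ u, HasDerivAt Bi (b u) u := ftc_deriv hbC 0
  have hbbm : HasDerivAt (bb m) (bb' m θ₀) θ₀ := hbbd m hm le_rfl θ₀ hθ₀
  -- derivative of the smooth representative
  have hG : HasDerivAt (fun θ => A1 (bb m θ) +
        φ * (Bi (η - c - θ) - Bi (bb m θ - c - θ)) + (Gi η - Gi (bb m θ)))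
      ((φ * α₁ (bb m θ₀) + g (bb m θ₀)) * bb' m θ₀ +
        φ * (b (η - c - θ₀) * (-1) - b (bb m θ₀ - c - θ₀) * (bb' m θ₀ - 1)) +
        (0 - g (bb m θ₀) * bb' m θ₀)) θ₀ := by
    have h1 : HasDerivAt (fun θ => A1 (bb m θ))
        ((φ * α₁ (bb m θ₀) + g (bb m θ₀)) * bb' m θ₀) θ₀ :=
      (hA1d _).comp θ₀ hbbm
    have h2a : HasDerivAt (fun θ : ℝ => η - c - θ) (-1) θ₀ := by
      simpa using (hasDerivAt_id θ₀).const_sub (η - c)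
    have h2 : HasDerivAt (fun θ => Bi (η - c - θ)) (b (η - c - θ₀) * (-1)) θ₀ :=
      (hBid _).comp θ₀ h2a
    have h3a : HasDerivAt (fun θ => bb m θ - c - θ) (bb' m θ₀ - 1) θ₀ := by
      exact (hbbm.sub_const c).sub (hasDerivAt_id θ₀)
    have h3 : HasDerivAt (fun θ => Bi (bb m θ - c - θ))
        (b (bb m θ₀ - c - θ₀) * (bb' m θ₀ - 1)) θ₀ :=
      (hBid _).comp θ₀ h3a
    have h4 : HasDerivAt (fun θ => Gi η - Gi (bb m θ)) (0 - g (bb m θ₀) * bb' m θ₀) θ₀ :=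
      (hasDerivAt_const θ₀ (Gi η)).sub ((hGid _).comp θ₀ hbbm)
    exact (h1.add ((h2.sub h3).const_mul φ)).add h4
  have hval : (φ * α₁ (bb m θ₀) + g (bb m θ₀)) * bb' m θ₀ +
        φ * (b (η - c - θ₀) * (-1) - b (bb m θ₀ - c - θ₀) * (bb' m θ₀ - 1)) +
        (0 - g (bb m θ₀) * bb' m θ₀)
      = φ * (b (bb m θ₀ - c - θ₀) - b (η - c - θ₀)) := by
    rcases H3 m hm le_rfl with h | h
    · rw [h]; ring
    · rw [h]; ring
  -- the piecewise integral agrees with the smooth representative on Ioo A B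
  have hEq : ∀ θ ∈ Set.Ioo A B, (∫ τ in a..η, f τ θ) =
      A1 (bb m θ) + φ * (Bi (η - c - θ) - Bi (bb m θ - c - θ)) + (Gi η - Gi (bb m θ)) := by
    intro θ hθ
    obtain ⟨h01, hmid, hmη⟩ := horder θ hθ
    have hcb : Continuous (fun τ : ℝ => b (τ - c - θ)) :=
      hbC.comp ((continuous_id.sub continuous_const).sub continuous_const)
    have hcont2 : Continuous (fun τ => φ * b (τ - c - θ) + g τ) := (continuous_const.mul hcb).add hg
    have key : ∀ j, 1 ≤ j → j ≤ m →
        a < bb j θ ∧ IntervalIntegrable (fun τ => f τ θ) volume a (bb j θ) ∧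
        (∫ τ in a..(bb j θ), f τ θ) = ∫ τ in a..(bb j θ), (φ * α₁ τ + g τ) := by
      intro j hj1
      induction j, hj1 using Nat.le_induction with
      | base =>
        intro _
        obtain ⟨hi, he⟩ := piece_aux hcont1 h01.le (fun τ h1 h2 => hf₃ θ hθ τ h1 h2)
        exact ⟨h01, hi, he⟩
      | succ j hj ih =>
        intro hj1m
        have hjm1 : j ≤ m - 1 := by omega
        obtain ⟨hbe, heb⟩ := hmid j hj hjm1
        obtain ⟨habj, hint, heqj⟩ := ih (by omega)
        obtain ⟨hi2, he2⟩ := piece_aux hcont2 hbe.le (fun τ h1 h2 => hf₁ θ hθ j hj hjm1 τ h1 h2)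
        obtain ⟨hi3, he3⟩ := piece_aux hcont1 heb.le (fun τ h1 h2 => hf₄ θ hθ j hj hjm1 τ h1 h2)
        have H1j := H1 θ hθ j hj hjm1
        have hib : IntervalIntegrable (fun τ => b (τ - c - θ)) volume (bb j θ) (ee j θ) :=
          (hbC.comp ((continuous_id.sub continuous_const).sub continuous_const)).intervalIntegrable _ _
        have hia : IntervalIntegrable α₁ volume (bb j θ) (ee j θ) := hα₁.intervalIntegrable _ _
        have hig : IntervalIntegrable g volume (bb j θ) (ee j θ) := hg.intervalIntegrable _ _
        have hswap : (∫ τ in bb j θ..ee j θ, (φ * b (τ - c - θ) + g τ)) =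
            ∫ τ in bb j θ..ee j θ, (φ * α₁ τ + g τ) := by
          have e1 : (∫ τ in bb j θ..ee j θ, (φ * α₁ τ + g τ)) -
              (∫ τ in bb j θ..ee j θ, (φ * b (τ - c - θ) + g τ)) =
              φ * ∫ τ in bb j θ..ee j θ, (α₁ τ - b (τ - c - θ)) := by
            rw [← intervalIntegral.integral_const_mul,
              ← intervalIntegral.integral_sub (hcont1.intervalIntegrable _ _)
                (hcont2.intervalIntegrable _ _)]
            apply intervalIntegral.integral_congr
            intro τ _
            ring
          rw [H1j, mul_zero] at e1
          linarith
        have hsum : (∫ τ in a..(bb (j+1) θ), f τ θ) =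
            (∫ τ in a..bb j θ, f τ θ) + (∫ τ in bb j θ..ee j θ, f τ θ) +
            (∫ τ in ee j θ..bb (j+1) θ, f τ θ) := by
          rw [intervalIntegral.integral_add_adjacent_intervals hint hi2,
            intervalIntegral.integral_add_adjacent_intervals (hint.trans hi2) hi3]
        have hsum' : (∫ τ in a..(bb (j+1) θ), (φ * α₁ τ + g τ)) =
            (∫ τ in a..bb j θ, (φ * α₁ τ + g τ)) +
            (∫ τ in bb j θ..ee j θ, (φ * α₁ τ + g τ)) +
            (∫ τ in ee j θ..bb (j+1) θ, (φ * α₁ τ + g τ)) := by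
          rw [intervalIntegral.integral_add_adjacent_intervals (hcont1.intervalIntegrable _ _)
              (hcont1.intervalIntegrable _ _),
            intervalIntegral.integral_add_adjacent_intervals (hcont1.intervalIntegrable _ _)
              (hcont1.intervalIntegrable _ _)]
        refine ⟨habj.trans (hbe.trans heb), (hint.trans hi2).trans hi3, ?_⟩
        rw [hsum, hsum', heqj, he2, hswap, he3]
    obtain ⟨ham, hintm, heqm⟩ := key m hm le_rfl
    obtain ⟨him, hem⟩ := piece_aux hcont2 hmη.le (fun τ h1 h2 => hf₂ θ hθ τ h1 h2.le)
    have hsplitfull : (∫ τ in a..η, f τ θ) =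
        (∫ τ in a..bb m θ, f τ θ) + ∫ τ in bb m θ..η, f τ θ :=
      (intervalIntegral.integral_add_adjacent_intervals hintm him).symm
    have hsplit : (∫ τ in bb m θ..η, (φ * b (τ - c - θ) + g τ)) =
        φ * (∫ τ in bb m θ..η, b (τ - c - θ)) + ∫ τ in bb m θ..η, g τ := by
      rw [intervalIntegral.integral_add (f := fun τ => φ * b (τ - c - θ)) ((continuous_const.mul hcb).intervalIntegrable _ _)
          (hg.intervalIntegrable _ _), intervalIntegral.integral_const_mul]
    have hcv : (∫ τ in bb m θ..η, b (τ - c - θ)) =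
        ∫ τ in (bb m θ - c - θ)..(η - c - θ), b τ := by
      simp only [sub_sub]
      exact intervalIntegral.integral_comp_sub_right b (c + θ)
    have hBidiff : ∀ X Y : ℝ, Bi X - Bi Y = ∫ τ in Y..X, b τ := fun X Y =>
      intervalIntegral.integral_interval_sub_left (hbC.intervalIntegrable _ _)
        (hbC.intervalIntegrable _ _)
    have hGidiff : ∀ X Y : ℝ, Gi X - Gi Y = ∫ τ in Y..X, g τ := fun X Y =>
      intervalIntegral.integral_interval_sub_left (hg.intervalIntegrable _ _)
        (hg.intervalIntegrable _ _)
    have hA1' : A1 (bb m θ) = ∫ τ in a..bb m θ, (φ * α₁ τ + g τ) := rfl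
    rw [hsplitfull, heqm, hem, hsplit, hcv, hA1', hBidiff, hGidiff]
    ring
  have hev : (fun θ => ∫ τ in a..η, f τ θ) =ᶠ[nhds θ₀]
      (fun θ => A1 (bb m θ) + φ * (Bi (η - c - θ) - Bi (bb m θ - c - θ)) + (Gi η - Gi (bb m θ))) :=
    Filter.eventually_of_mem (isOpen_Ioo.mem_nhds hθ₀) hEq
  exact hval ▸ hG.congr_of_eventuallyEq hev
end
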